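/- Fix t_i > 0 and let F(x) = 1_{x ≥ t_i} (deterministic infectious period of length t_i), so Gᶜ(x) := 1 − F(x⁻) = 1_{x ≤ t_i}. Let ī₀ : [0, t_i] → ℝ≥0 and b : ℝ≥0 → ℝ≥0 be continuous. Define ī(t,x) := ī₀(x−t) for t ≤ x < t_i, ī(t,x) := b(t−x) for x < min(t, t_i), and ī(t,x) := 0 for x ≥ t_i. Then for every bounded C¹ test function φ with compact support in (0,∞)², ī satisfies in the distributional sense ∂ī/∂t + ∂ī/∂x = −δ_{t_i}(x) ī(t,x), where δ_{t_i} is the Dirac mass at t_i; i.e., the distribution (∂_t + ∂_x) ī equals the measure −ī(t, t_i⁻) dt ⊗ δ_{t_i}(dx). -/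

import Mathlib

open MeasureTheory

/-- Helper: a measurable function on `ℝ × ℝ` vanishing outside a finite-measure set
and bounded on that set is integrable. -/
lemma integrable_of_bound_helper {f : ℝ × ℝ → ℝ} {S : Set (ℝ × ℝ)} (hSm : MeasurableSet S)
    (hSf : volume S < ⊤) (hm : AEStronglyMeasurable f volume) (C : ℝ)
    (h0 : ∀ p ∉ S, f p = 0) (hC : ∀ p ∈ S, |f p| ≤ C) :
    Integrable f (volume : Measure (ℝ × ℝ)) := by
  have hbound : Integrable (S.indicator fun _ => C) (volume : Measure (ℝ × ℝ)) :=
    (integrable_indicator_iff hSm).mpr (integrableOn_const hSf.ne)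
  refine hbound.mono' hm ?_
  filter_upwards with p
  by_cases hp : p ∈ S
  · simpa [Set.indicator_of_mem hp, Real.norm_eq_abs] using hC p hp
  · simp [Set.indicator_of_notMem hp, h0 p hp]

/-- With deterministic infectious periods of length t_i, the age density solves
    ∂ī/∂t + ∂ī/∂x = −δ_{t_i}(x) ī in the distributional sense: against every C¹ test
    function compactly supported in (0,∞)², the distributional identity reads
    ∬ ī (∂_tφ + ∂_xφ) = ∫ ī(t,t_i⁻) φ(t,t_i) dt. -/
theorem deterministic_period_PDE_distributional
    (ti : ℝ) (hti : 0 < ti)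
    (i0 b : ℝ → ℝ) (hi0_cont : Continuous i0) (hi0_nonneg : ∀ x, 0 ≤ i0 x)
    (hb_cont : Continuous b) (hb_nonneg : ∀ t, 0 ≤ b t)
    (ii : ℝ → ℝ → ℝ)
    (hii : ∀ t x, ii t x =
      if ti ≤ x then 0 else if t ≤ x then i0 (x - t) else b (t - x))
    (ilim : ℝ → ℝ)
    (hilim : ∀ t, ilim t = if t ≤ ti then i0 (ti - t) else b (t - ti)) :
    ∀ φ : ℝ × ℝ → ℝ, ContDiff ℝ 1 φ → HasCompactSupport φ →
      tsupport φ ⊆ Set.Ioi 0 ×ˢ Set.Ioi 0 →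
      (∫ p in (Set.Ioi (0:ℝ)) ×ˢ (Set.Ioi (0:ℝ)),
          ii p.1 p.2 * (fderiv ℝ φ p (1, 0) + fderiv ℝ φ p (0, 1)))
        = ∫ t in Set.Ioi (0:ℝ), ilim t * φ (t, ti) := by
  intro φ hφ hφc hφs
  -- the transport derivative
  set D : ℝ × ℝ → ℝ := fun p => fderiv ℝ φ p (1, 1) with hDdef
  have hDcont : Continuous D :=
    (hφ.continuous_fderiv one_ne_zero).clm_apply continuous_const
  have hD0 : ∀ p : ℝ × ℝ, p ∉ (Set.Ioi (0:ℝ)) ×ˢ (Set.Ioi (0:ℝ)) → D p = 0 := by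
    intro p hp
    have hfd : fderiv ℝ φ p = 0 := by
      by_contra h
      exact hp (hφs (support_fderiv_subset ℝ h))
    simp [hDdef, hfd]
  have hφ0 : ∀ p : ℝ × ℝ, p ∉ (Set.Ioi (0:ℝ)) ×ˢ (Set.Ioi (0:ℝ)) → φ p = 0 := by
    intro p hp
    exact image_eq_zero_of_notMem_tsupport (fun h => hp (hφs h))
  -- the profile along characteristics
  set g : ℝ → ℝ := fun s => if s ≤ 0 then i0 (-s) else b s with hgdef
  have hg_meas : Measurable g :=
    Measurable.ite (measurableSet_le measurable_id measurable_const)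
      (hi0_cont.measurable.comp measurable_neg) hb_cont.measurable
  set m : ℝ → ℝ := fun s => max (i0 (-s)) (b s) with hmdef
  have hm_cont : Continuous m := (hi0_cont.comp continuous_neg).max hb_cont
  have hm_nonneg : ∀ s, 0 ≤ m s := fun s => le_trans (hi0_nonneg (-s)) (le_max_left _ _)
  have hg_bound : ∀ s, |g s| ≤ m s := by
    intro s
    simp only [hgdef, hmdef]
    split_ifs with h
    · rw [abs_of_nonneg (hi0_nonneg _)]; exact le_max_left _ _
    · rw [abs_of_nonneg (hb_nonneg _)]; exact le_max_right _ _
  -- a bound on the support of φ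
  obtain ⟨r, hr⟩ := hφc.isBounded.subset_closedBall 0
  set M : ℝ := max r 0 with hMdef
  have hM0 : 0 ≤ M := le_max_right _ _
  have hKM : ∀ p : ℝ × ℝ, p ∈ tsupport φ → |p.1| ≤ M ∧ |p.2| ≤ M := by
    intro p hp
    have h1 : p ∈ Metric.closedBall (0 : ℝ × ℝ) r := hr hp
    rw [Metric.mem_closedBall, dist_zero_right, Prod.norm_def] at h1
    constructor
    · exact le_trans (le_trans (le_max_left _ _) h1) (le_max_left _ _)
    · exact le_trans (le_trans (le_max_right _ _) h1) (le_max_left _ _)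
  have hDK : ∀ p : ℝ × ℝ, D p ≠ 0 → p ∈ tsupport φ := by
    intro p hp
    have : fderiv ℝ φ p ≠ 0 := by
      intro h; apply hp; simp [hDdef, h]
    exact support_fderiv_subset ℝ this
  -- the extended integrand
  set F : ℝ × ℝ → ℝ := fun p => if p.2 ∈ Set.Ioo 0 ti then g (p.1 - p.2) * D p else 0
    with hFdef
  have hF_eq : ∀ p : ℝ × ℝ,
      ii p.1 p.2 * (fderiv ℝ φ p (1, 0) + fderiv ℝ φ p (0, 1)) = F p := by
    intro p
    have hsum : fderiv ℝ φ p (1, 0) + fderiv ℝ φ p (0, 1) = D p := by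
      rw [hDdef, ← ContinuousLinearMap.map_add]
      norm_num
    rw [hsum, hii]
    simp only [hFdef]
    by_cases h2 : p.2 ∈ Set.Ioo 0 ti
    · rw [if_neg (not_le.mpr h2.2), if_pos h2]
      congr 1
      simp only [hgdef]
      by_cases h : p.1 ≤ p.2
      · rw [if_pos h, if_pos (sub_nonpos.mpr h), neg_sub]
      · rw [if_neg h, if_neg (fun hc => h (sub_nonpos.mp hc))]
    · rw [if_neg h2]
      rw [Set.mem_Ioo, not_and_or] at h2
      rcases h2 with h | h
      · have hp : p ∉ (Set.Ioi (0:ℝ)) ×ˢ (Set.Ioi (0:ℝ)) := by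
          intro hmem; exact h hmem.2
        rw [hD0 p hp, mul_zero]
      · rw [if_pos (not_lt.mp h), zero_mul]
  have hF0 : ∀ p : ℝ × ℝ, p ∉ (Set.Ioi (0:ℝ)) ×ˢ (Set.Ioi (0:ℝ)) → F p = 0 := by
    intro p hp
    simp [hFdef, hD0 p hp, ite_self]
  -- Step 1 : extend the set integral to all of ℝ²
  have step1 : (∫ p in (Set.Ioi (0:ℝ)) ×ˢ (Set.Ioi (0:ℝ)),
      ii p.1 p.2 * (fderiv ℝ φ p (1, 0) + fderiv ℝ φ p (0, 1))) = ∫ p : ℝ × ℝ, F p := by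
    rw [show (fun p : ℝ × ℝ => ii p.1 p.2 * (fderiv ℝ φ p (1, 0) + fderiv ℝ φ p (0, 1)))
        = F from funext hF_eq]
    exact setIntegral_eq_integral_of_forall_compl_eq_zero hF0
  -- integrability of F
  have hF_meas : Measurable F := by
    apply Measurable.ite
    · exact measurableSet_Ioo.preimage measurable_snd
    · exact (hg_meas.comp (measurable_fst.sub measurable_snd)).mul hDcont.measurable
    · exact measurable_const
  have hF_int : Integrable F (volume : Measure (ℝ × ℝ)) := by
    set S : Set (ℝ × ℝ) := Set.Icc (-M) M ×ˢ Set.Icc (-M) M with hSdef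
    have hScompact : IsCompact S := isCompact_Icc.prod isCompact_Icc
    obtain ⟨C, hC⟩ := hScompact.exists_bound_of_continuousOn
      ((hm_cont.comp (continuous_fst.sub continuous_snd)).mul hDcont.abs).continuousOn
    apply integrable_of_bound_helper (measurableSet_Icc.prod measurableSet_Icc)
      hScompact.measure_lt_top hF_meas.aestronglyMeasurable C
    · intro p hp
      by_contra h
      have hD : D p ≠ 0 := by
        intro hD
        apply h; simp [hFdef, hD, ite_self]
      have := hKM p (hDK p hD)
      exact hp ⟨abs_le.mp this.1, abs_le.mp this.2⟩
    · intro p hp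
      have h1 : |F p| ≤ m (p.1 - p.2) * |D p| := by
        simp only [hFdef]
        split_ifs with h
        · rw [abs_mul]
          exact mul_le_mul_of_nonneg_right (hg_bound _) (abs_nonneg _)
        · simpa using mul_nonneg (hm_nonneg _) (abs_nonneg (D p))
      calc |F p| ≤ m (p.1 - p.2) * |D p| := h1
        _ ≤ abs (m (p.1 - p.2) * |D p|) := le_abs_self _
        _ ≤ C := hC p hp
  -- Step 2 : Fubini, outer integral in x
  have step2 : (∫ p : ℝ × ℝ, F p) = ∫ x : ℝ, ∫ t : ℝ, F (t, x) ∂volume ∂volume := by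
    rw [show (volume : Measure (ℝ × ℝ)) = (volume : Measure ℝ).prod volume from
      Measure.volume_eq_prod ℝ ℝ] at hF_int ⊢
    exact integral_prod_symm F hF_int
  -- the sheared integrand
  set H : ℝ → ℝ → ℝ := fun x s => if x ∈ Set.Ioo 0 ti then g s * D (s + x, x) else 0
    with hHdef
  -- Step 3 : translate the inner integral
  have step3 : ∀ x : ℝ, (∫ t : ℝ, F (t, x) ∂volume) = ∫ s : ℝ, H x s ∂volume := by
    intro x
    by_cases hx : x ∈ Set.Ioo 0 ti
    · have h1 : (∫ t : ℝ, F (t, x) ∂volume) = ∫ t : ℝ, g (t - x) * D (t, x) ∂volume := by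
        congr 1; funext t
        show (if (t, x).2 ∈ Set.Ioo 0 ti then g ((t, x).1 - (t, x).2) * D (t, x) else 0)
          = g (t - x) * D (t, x)
        exact if_pos hx
      have h2 := integral_add_right_eq_self (μ := (volume : Measure ℝ))
        (fun t => g (t - x) * D (t, x)) x
      rw [h1, ← h2]
      congr 1; funext s
      rw [add_sub_cancel_right]
      exact (if_pos hx).symm
    · have h1 : ∀ t : ℝ, F (t, x) = 0 := fun t => if_neg hx
      have h2 : ∀ s : ℝ, H x s = 0 := fun s => if_neg hx
      simp only [h1, h2, integral_zero]
  -- integrability of the sheared integrand for Fubini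
  have hH_int : Integrable (Function.uncurry H) ((volume : Measure ℝ).prod volume) := by
    rw [show (volume : Measure ℝ).prod volume = (volume : Measure (ℝ × ℝ)) from
      (Measure.volume_eq_prod ℝ ℝ).symm]
    set S' : Set (ℝ × ℝ) := Set.Icc (-M) M ×ˢ Set.Icc (-(2*M)) (2*M) with hS'def
    have hS'compact : IsCompact S' := isCompact_Icc.prod isCompact_Icc
    obtain ⟨C, hC⟩ := hS'compact.exists_bound_of_continuousOn
      (Continuous.continuousOn (Continuous.mul (hm_cont.comp continuous_snd)
        ((hDcont.comp ((continuous_snd.add continuous_fst).prodMk continuous_fst)).abs)))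
    have hH_meas : Measurable (Function.uncurry H) := by
      apply Measurable.ite
      · exact measurableSet_Ioo.preimage measurable_fst
      · exact (hg_meas.comp measurable_snd).mul
          (hDcont.measurable.comp ((measurable_snd.add measurable_fst).prodMk measurable_fst))
      · exact measurable_const
    apply integrable_of_bound_helper (measurableSet_Icc.prod measurableSet_Icc)
      hS'compact.measure_lt_top hH_meas.aestronglyMeasurable C
    · intro p hp
      by_contra h
      have hD : D (p.2 + p.1, p.1) ≠ 0 := by
        intro hD
        apply h
        simp only [Function.uncurry, hHdef, hD, mul_zero, ite_self]
      have hmem := hKM _ (hDK _ hD)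
      simp only at hmem
      apply hp
      constructor
      · exact abs_le.mp hmem.2
      · have h1 : |p.2 + p.1| ≤ M := hmem.1
        have h2 : |p.1| ≤ M := hmem.2
        have : |p.2| ≤ 2 * M := by
          have := abs_sub_abs_le_abs_sub (p.2) (-p.1)
          have habs : |p.2 - -p.1| = |p.2 + p.1| := by ring_nf
          calc |p.2| = |p.2 + p.1 + -p.1| := by ring_nf
            _ ≤ |p.2 + p.1| + |-p.1| := abs_add_le _ _
            _ ≤ M + M := add_le_add h1 (by rwa [abs_neg])
            _ = 2 * M := by ring
        exact abs_le.mp this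
    · intro p hp
      have h1 : |Function.uncurry H p| ≤ m p.2 * |D (p.2 + p.1, p.1)| := by
        simp only [Function.uncurry, hHdef]
        split_ifs with h
        · rw [abs_mul]
          exact mul_le_mul_of_nonneg_right (hg_bound _) (abs_nonneg _)
        · simpa using mul_nonneg (hm_nonneg _) (abs_nonneg _)
      calc |Function.uncurry H p| ≤ m p.2 * |D (p.2 + p.1, p.1)| := h1
        _ ≤ abs (m p.2 * |D (p.2 + p.1, p.1)|) := le_abs_self _
        _ ≤ C := hC p hp
  -- Step 4 : swap the order of integration
  have step4 : (∫ x : ℝ, ∫ s : ℝ, H x s ∂volume ∂volume)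
      = ∫ s : ℝ, ∫ x : ℝ, H x s ∂volume ∂volume :=
    integral_integral_swap hH_int
  -- Step 5 : fundamental theorem of calculus along characteristics
  have step5 : ∀ s : ℝ, (∫ x : ℝ, H x s ∂volume) = g s * φ (s + ti, ti) := by
    intro s
    have hind : (∫ x : ℝ, H x s ∂volume)
        = ∫ x in Set.Ioo (0:ℝ) ti, g s * D (s + x, x) ∂volume := by
      rw [← integral_indicator measurableSet_Ioo]
      congr 1; funext x
      simp [hHdef, Set.indicator_apply]
    rw [hind, integral_const_mul]
    have key : (∫ x in Set.Ioo (0:ℝ) ti, D (s + x, x) ∂volume) = φ (s + ti, ti) := by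
      have hderiv : ∀ x : ℝ, HasDerivAt (fun y => φ (s + y, y)) (D (s + x, x)) x := by
        intro x
        have h1 : HasDerivAt (fun y : ℝ => ((s + y : ℝ), y)) (1, 1) x :=
          ((hasDerivAt_id x).const_add s).prodMk (hasDerivAt_id x)
        have h2 : HasFDerivAt φ (fderiv ℝ φ (s + x, x)) (s + x, x) :=
          (hφ.differentiable one_ne_zero (s + x, x)).hasFDerivAt
        have h3 : HasDerivAt (φ ∘ fun y : ℝ => (s + y, y))
            ((fderiv ℝ φ (s + x, x)) (1, 1)) x :=
          HasFDerivAt.comp_hasDerivAt x h2 h1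
        exact h3
      have hcont : Continuous fun x : ℝ => D (s + x, x) :=
        hDcont.comp ((continuous_const.add continuous_id).prodMk continuous_id)
      have hFTC := intervalIntegral.integral_eq_sub_of_hasDerivAt
        (f := fun y => φ (s + y, y)) (a := 0) (b := ti)
        (fun x _ => hderiv x) (hcont.intervalIntegrable 0 ti)
      rw [← integral_Ioc_eq_integral_Ioo, ← intervalIntegral.integral_of_le hti.le, hFTC]
      have hzero : φ (s + 0, 0) = 0 := hφ0 _ (by simp)
      show φ (s + ti, ti) - φ (s + 0, 0) = φ (s + ti, ti)
      rw [hzero, sub_zero]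
    rw [key]
  -- Step 6 : translate back and restrict to the half line
  have step6 : (∫ s : ℝ, g s * φ (s + ti, ti) ∂volume)
      = ∫ t in Set.Ioi (0:ℝ), ilim t * φ (t, ti) := by
    have htrans := integral_add_right_eq_self (μ := (volume : Measure ℝ))
      (fun t => g (t - ti) * φ (t, ti)) ti
    have h1 : (∫ s : ℝ, g s * φ (s + ti, ti) ∂volume)
        = ∫ t : ℝ, g (t - ti) * φ (t, ti) ∂volume := by
      rw [← htrans]
      congr 1; funext s
      simp [add_sub_cancel_right]
    have h2 : ∀ t : ℝ, g (t - ti) = ilim t := by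
      intro t
      rw [hilim]
      simp only [hgdef]
      by_cases h : t ≤ ti
      · rw [if_pos (sub_nonpos.mpr h), if_pos h, neg_sub]
      · rw [if_neg (fun hc => h (sub_nonpos.mp hc)), if_neg h]
    have h3 : ∀ t : ℝ, t ∉ Set.Ioi (0:ℝ) → ilim t * φ (t, ti) = 0 := by
      intro t ht
      have : φ (t, ti) = 0 := hφ0 (t, ti) (fun hmem => ht hmem.1)
      rw [this, mul_zero]
    rw [h1]
    have h4 : (fun t : ℝ => g (t - ti) * φ (t, ti)) = fun t : ℝ => ilim t * φ (t, ti) := by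
      funext t; rw [h2]
    rw [h4]
    exact (setIntegral_eq_integral_of_forall_compl_eq_zero h3).symm
  calc (∫ p in (Set.Ioi (0:ℝ)) ×ˢ (Set.Ioi (0:ℝ)),
          ii p.1 p.2 * (fderiv ℝ φ p (1, 0) + fderiv ℝ φ p (0, 1)))
      = ∫ p : ℝ × ℝ, F p := step1
    _ = ∫ x : ℝ, ∫ t : ℝ, F (t, x) ∂volume ∂volume := step2
    _ = ∫ x : ℝ, ∫ s : ℝ, H x s ∂volume ∂volume := by
        congr 1; funext x; exact step3 x
    _ = ∫ s : ℝ, ∫ x : ℝ, H x s ∂volume ∂volume := step4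
    _ = ∫ s : ℝ, g s * φ (s + ti, ti) ∂volume := by
        congr 1; funext s; exact step5 s
    _ = ∫ t in Set.Ioi (0:ℝ), ilim t * φ (t, ti) := step6
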